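/- Let G be a digraph compatible with an n-ary cyclic operation c (n ≥ 2). If G contains a directed closed walk of length n², then G has a loop. -/
import Mathlib


/-- A digraph compatible with an `n`-ary cyclic operation that contains a directed
closed walk of length `n²` has a loop. -/
theorem stmt9 {A : Type} (E : Set (A × A)) (n : ℕ) (hn : 2 ≤ n)
    (c : (Fin n → A) → A)
    (hcyc : ∀ x : Fin n → A,
      c x = c (fun i => x ⟨(i.val + 1) % n, Nat.mod_lt _ (by omega)⟩))
    (hcomp : ∀ a b : Fin n → A, (∀ i, (a i, b i) ∈ E) → (c a, c b) ∈ E)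
    (w : ℕ → A) (hw0 : w (n ^ 2) = w 0) (hw : ∀ i < n ^ 2, (w i, w (i + 1)) ∈ E) :
    ∃ x : A, (x, x) ∈ E := by
  set v : ℕ → A := fun i => c (fun j => w (i + j.val * n)) with hv
  have hvE : ∀ i < n, (v i, v (i + 1)) ∈ E := by
    intro i hi
    apply hcomp
    intro j
    have hj : j.val < n := j.isLt
    have hlt : i + j.val * n < n ^ 2 := by nlinarith
    have e : i + 1 + j.val * n = (i + j.val * n) + 1 := by omega
    simp only [e]
    exact hw _ hlt
  have hvn : v n = v 0 := by
    have h := hcyc (fun j => w (j.val * n))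
    simp only [hv]
    have e0 : (fun j : Fin n => w (0 + j.val * n)) = fun j : Fin n => w (j.val * n) := by
      funext j; norm_num
    rw [e0, h]
    congr 1
    funext j
    by_cases hj : j.val + 1 < n
    · simp only [Nat.mod_eq_of_lt hj]
      congr 1
      ring
    · have hj' : j.val + 1 = n := by omega
      have e1 : (j.val + 1) % n = 0 := by rw [hj', Nat.mod_self]
      have e2 : n + j.val * n = n ^ 2 := by
        calc n + j.val * n = (j.val + 1) * n := by ring
          _ = n * n := by rw [hj']
          _ = n ^ 2 := (pow_two n).symm
      simp only [e1, e2, hw0, Nat.zero_mul]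
  refine ⟨c (fun j => v j.val), ?_⟩
  have key : c (fun j => v j.val) = c (fun j => v (j.val + 1)) := by
    have h := hcyc (fun j => v j.val)
    rw [h]
    congr 1
    funext j
    by_cases hj : j.val + 1 < n
    · simp [Nat.mod_eq_of_lt hj]
    · have hj' : j.val + 1 = n := by omega
      have e1 : (j.val + 1) % n = 0 := by rw [hj', Nat.mod_self]
      show v ((j.val + 1) % n) = v (j.val + 1)
      rw [e1, hj', hvn]
  nth_rewrite 2 [key]
  apply hcomp
  intro j
  exact hvE j.val j.isLt
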